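/- The evaluation map ev: J_n → J_{n-2} defined by ev(f) = f|_{x_{n-1} = t, x_n = -t} is a well-defined ring homomorphism, i.e., for f ∈ J_n the resulting Laurent polynomial in x_1,...,x_{n-2} again lies in J_{n-2}, and ev respects addition and multiplication. -/

import Mathlib

/-- Laurent polynomials in `n` variables over `ℚ`. -/
abbrev LP (n : ℕ) : Type := AddMonoidAlgebra ℚ (Fin n →₀ ℤ)

/-- Evaluation of a Laurent polynomial at a point with invertible coordinates. -/
noncomputable def lpEval {n : ℕ} (x : Fin n → ℚˣ) (f : LP n) : ℚ :=
  Finsupp.sum f.coeff fun d c => c * ∏ i, ((x i ^ (d i) : ℚˣ) : ℚ)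

/-- `f` is symmetric (invariant under the `Sₙ`-action permuting the variables). -/
def IsSymmLP {n : ℕ} (f : LP n) : Prop :=
  ∀ (σ : Equiv.Perm (Fin n)) (x : Fin n → ℚˣ), lpEval (x ∘ σ) f = lpEval x f

/-- The point obtained by substituting `x i = t`, `x j = -t`, others given by `y`. -/
def substPair {n : ℕ} (i j : Fin n) (t : ℚˣ) (y : Fin n → ℚˣ) : Fin n → ℚˣ :=
  fun k => if k = i then t else if k = j then -t else y k

/-- The variable `xᵢ` as a Laurent polynomial. -/
noncomputable def Xv {n : ℕ} (i : Fin n) : LP n :=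
  AddMonoidAlgebra.single (Finsupp.single i (1 : ℤ)) (1 : ℚ)

/-- The point of (ℚˣ)ⁿ whose first n-2 coordinates are y and whose last two
coordinates are t and -t. -/
def embedPt {n : ℕ} (t : ℚˣ) (y : Fin (n - 2) → ℚˣ) : Fin n → ℚˣ :=
  fun i => if h : (i : ℕ) < n - 2 then y ⟨i, h⟩ else if (i : ℕ) = n - 2 then t else -t

noncomputable def evalHom {n : ℕ} (x : Fin n → ℚˣ) : LP n →ₐ[ℚ] ℚ :=
  AddMonoidAlgebra.lift ℚ ℚ (Fin n →₀ ℤ)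
    { toFun := fun d => ∏ i, ((x i ^ (Multiplicative.toAdd d i) : ℚˣ) : ℚ)
      map_one' := by simp
      map_mul' := by
        intro d e
        simp only [toAdd_mul, Finsupp.add_apply, zpow_add, Units.val_mul,
          ← Finset.prod_mul_distrib] }

lemma lpEval_eq {n : ℕ} (x : Fin n → ℚˣ) (f : LP n) : lpEval x f = evalHom x f := by
  rw [evalHom, AddMonoidAlgebra.lift_apply]
  simp [lpEval, smul_eq_mul]

lemma lpEval_add {n : ℕ} (x : Fin n → ℚˣ) (f g : LP n) :
    lpEval x (f + g) = lpEval x f + lpEval x g := by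
  simp [lpEval_eq, map_add]

lemma lpEval_mul {n : ℕ} (x : Fin n → ℚˣ) (f g : LP n) :
    lpEval x (f * g) = lpEval x f * lpEval x g := by
  simp [lpEval_eq, map_mul]

lemma lpEval_one {n : ℕ} (x : Fin n → ℚˣ) : lpEval x (1 : LP n) = 1 := by
  simp [lpEval_eq, map_one]

lemma lpEval_single {n : ℕ} (x : Fin n → ℚˣ) (d : Fin n →₀ ℤ) (c : ℚ) :
    lpEval x (AddMonoidAlgebra.single d c) = c * ∏ i, ((x i ^ (d i) : ℚˣ) : ℚ) :=
  Finsupp.sum_single_index (by simp)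

lemma prod_split {n : ℕ} (hn : 4 ≤ n) (G : Fin n → ℚ) :
    ∏ i, G i = (∏ i : Fin (n - 2), G (Fin.castLE (by omega) i)) *
      G ⟨n - 2, by omega⟩ * G ⟨n - 1, by omega⟩ := by
  have hg : ∀ m : ℕ, ∀ (H : Fin m → ℚ),
      ∏ i, H i = ∏ i ∈ Finset.range m, (fun j => if h : j < m then H ⟨j, h⟩ else 1) i := by
    intro m H
    rw [← Fin.prod_univ_eq_prod_range]
    exact Finset.prod_congr rfl (fun i _ => by simp [i.isLt])
  rw [hg n G, hg (n - 2) (fun i => G (Fin.castLE (by omega) i))]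
  rw [show Finset.range n = Finset.range ((n - 2) + 1 + 1) from by congr 1; omega]
  rw [Finset.prod_range_succ, Finset.prod_range_succ]
  have h2 : n - 2 < n := by omega
  have h3 : n - 2 + 1 < n := by omega
  rw [dif_pos h2, dif_pos h3]
  congr 2
  · exact Finset.prod_congr rfl (fun i hi => by
      have hi' : i < n - 2 := Finset.mem_range.mp hi
      have hin : i < n := by omega
      simp [hi', hin])
  · congr 1; omega

noncomputable def push (n : ℕ) (hn : 4 ≤ n) (f : LP n) : LP (n - 2) :=
  Finsupp.sum f.coeff fun d c => AddMonoidAlgebra.single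
    (Finsupp.equivFunOnFinite.symm fun i => d (Fin.castLE (by omega) i))
    (c * (((-1 : ℚˣ) ^ (d ⟨n - 1, by omega⟩) : ℚˣ) : ℚ))

lemma embedPt_castLE {n : ℕ} (hn : 4 ≤ n) (t : ℚˣ) (y : Fin (n - 2) → ℚˣ)
    (i : Fin (n - 2)) : embedPt t y (Fin.castLE (by omega) i) = y i := by
  have h : ((Fin.castLE (show n - 2 ≤ n by omega) i : Fin n) : ℕ) < n - 2 := i.isLt
  simp [embedPt, h]

lemma embedPt_last1 {n : ℕ} (hn : 4 ≤ n) (t : ℚˣ) (y : Fin (n - 2) → ℚˣ) :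
    embedPt t y ⟨n - 2, by omega⟩ = t := by
  simp [embedPt]

lemma embedPt_last2 {n : ℕ} (hn : 4 ≤ n) (t : ℚˣ) (y : Fin (n - 2) → ℚˣ) :
    embedPt t y ⟨n - 1, by omega⟩ = -t := by
  have h1 : ¬ (n - 1 < n - 2) := by omega
  have h2 : ¬ (n - 1 = n - 2) := by omega
  simp [embedPt, h1, h2]

lemma corr_push {n : ℕ} (hn : 4 ≤ n) (f : LP n) (y : Fin (n - 2) → ℚˣ) :
    lpEval (embedPt 1 y) f = lpEval y (push n hn f) := by
  rw [push, lpEval_eq y, map_finsuppSum]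
  rw [lpEval, Finsupp.sum_congr]
  intro d _
  rw [← lpEval_eq, lpEval_single]
  rw [prod_split hn (fun i => ((embedPt 1 y i ^ (d i) : ℚˣ) : ℚ))]
  simp only [embedPt_last1 hn, embedPt_last2 hn, embedPt_castLE hn]
  simp only [Finsupp.coe_equivFunOnFinite_symm, one_zpow, Units.val_one, mul_one]
  ring

def extPerm {n : ℕ} (hn : 4 ≤ n) (σ : Equiv.Perm (Fin (n - 2))) : Equiv.Perm (Fin n) where
  toFun k := if h : (k : ℕ) < n - 2 then Fin.castLE (by omega) (σ ⟨k, h⟩) else k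
  invFun k := if h : (k : ℕ) < n - 2 then Fin.castLE (by omega) (σ.symm ⟨k, h⟩) else k
  left_inv k := by
    by_cases h : (k : ℕ) < n - 2
    · have h2 : ((Fin.castLE (show n - 2 ≤ n by omega) (σ ⟨k, h⟩) : Fin n) : ℕ) < n - 2 :=
        (σ ⟨k, h⟩).isLt
      simp only [dif_pos h, dif_pos h2]
      apply Fin.ext
      simp
    · simp only [dif_neg h]
  right_inv k := by
    by_cases h : (k : ℕ) < n - 2
    · have h2 : ((Fin.castLE (show n - 2 ≤ n by omega) (σ.symm ⟨k, h⟩) : Fin n) : ℕ) < n - 2 :=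
        (σ.symm ⟨k, h⟩).isLt
      simp only [dif_pos h, dif_pos h2]
      apply Fin.ext
      simp
    · simp only [dif_neg h]

lemma embedPt_comp {n : ℕ} (hn : 4 ≤ n) (t : ℚˣ) (x : Fin (n - 2) → ℚˣ)
    (σ : Equiv.Perm (Fin (n - 2))) :
    (embedPt t (x ∘ σ) : Fin n → ℚˣ) = (embedPt t x) ∘ (extPerm hn σ) := by
  funext k
  by_cases h : (k : ℕ) < n - 2
  · have h2 : ((Fin.castLE (show n - 2 ≤ n by omega) (σ ⟨k, h⟩) : Fin n) : ℕ) < n - 2 :=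
      (σ ⟨k, h⟩).isLt
    simp only [embedPt, Function.comp_apply, extPerm, Equiv.coe_fn_mk, dif_pos h, dif_pos h2]
    congr 1
  · simp only [embedPt, Function.comp_apply, extPerm, Equiv.coe_fn_mk, dif_neg h]

set_option maxHeartbeats 1000000 in
lemma eval_embed_indep {n : ℕ} (hn : 4 ≤ n) (f : LP n) (hsym : IsSymmLP f)
    (hind : ∀ (t t' : ℚˣ) (y : Fin n → ℚˣ),
      lpEval (substPair ⟨0, by have := hn; omega⟩ ⟨1, by have := hn; omega⟩ t y) f =
      lpEval (substPair ⟨0, by have := hn; omega⟩ ⟨1, by have := hn; omega⟩ t' y) f)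
    (t : ℚˣ) (y : Fin (n - 2) → ℚˣ) :
    lpEval (embedPt t y) f = lpEval (embedPt 1 y) f := by
  set a : Fin n := ⟨0, by omega⟩ with ha
  set b : Fin n := ⟨1, by omega⟩ with hb
  set c : Fin n := ⟨n - 2, by omega⟩ with hc
  set d : Fin n := ⟨n - 1, by omega⟩ with hd
  obtain ⟨z, hz⟩ : ∃ z : Fin n → ℚˣ, z = fun (k : Fin n) => if h : (k : ℕ) < n - 2 then y ⟨k, h⟩
    else if (k : ℕ) = n - 2 then y ⟨0, by omega⟩ else y ⟨1, by omega⟩ := ⟨_, rfl⟩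
  have hab : a ≠ b := by simp [ha, hb, Fin.ext_iff]
  have hac : a ≠ c := by simp [ha, hc, Fin.ext_iff]; omega
  have had : a ≠ d := by simp [ha, hd, Fin.ext_iff]; omega
  have hbc : b ≠ c := by simp [hb, hc, Fin.ext_iff]; omega
  have hbd : b ≠ d := by simp [hb, hd, Fin.ext_iff]; omega
  have hcd : c ≠ d := by simp [hc, hd, Fin.ext_iff]; omega
  have key : ∀ s : ℚˣ,
      embedPt s y = (substPair a b s z) ∘ ((Equiv.swap a c).trans (Equiv.swap b d)) := by
    intro s
    funext k
    simp only [Function.comp_apply, Equiv.trans_apply]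
    rcases eq_or_ne k a with rfl | hka
    · rw [Equiv.swap_apply_left, Equiv.swap_apply_of_ne_of_ne hbc.symm hcd]
      have h1 : (a : ℕ) < n - 2 := by simp [ha]; omega
      have h2 : ¬ ((c : ℕ) < n - 2) := by simp [hc]
      simp only [embedPt, substPair, dif_pos h1, if_neg hac.symm, if_neg hbc.symm, hz,
        dif_neg h2]
      simp [hc, ha]
    · rcases eq_or_ne k b with rfl | hkb
      · rw [Equiv.swap_apply_of_ne_of_ne hab.symm hbc, Equiv.swap_apply_left]
        have h1 : (b : ℕ) < n - 2 := by simp [hb]; omega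
        have h2 : ¬ ((d : ℕ) < n - 2) := by simp [hd]; omega
        have h3 : ¬ ((d : ℕ) = n - 2) := by simp [hd]; omega
        simp only [embedPt, substPair, dif_pos h1, if_neg had.symm, if_neg hbd.symm, hz,
          dif_neg h2, if_neg h3]
        rfl
      · rcases eq_or_ne k c with rfl | hkc
        · rw [Equiv.swap_apply_right, Equiv.swap_apply_of_ne_of_ne hab had]
          have h2 : ¬ ((c : ℕ) < n - 2) := by simp [hc]
          simp only [embedPt, substPair, dif_neg h2, if_pos rfl]
          simp [hc]
        · rcases eq_or_ne k d with rfl | hkd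
          · rw [Equiv.swap_apply_of_ne_of_ne had.symm hcd.symm, Equiv.swap_apply_right]
            have h2 : ¬ ((d : ℕ) < n - 2) := by simp [hd]; omega
            have h3 : ¬ ((d : ℕ) = n - 2) := by simp [hd]; omega
            simp only [embedPt, substPair, dif_neg h2, if_neg h3, if_neg hab,
              if_pos rfl]
            simp [Ne.symm hab]
          · rw [Equiv.swap_apply_of_ne_of_ne hka hkc, Equiv.swap_apply_of_ne_of_ne hkb hkd]
            have h1 : (k : ℕ) < n - 2 := by
              have := k.isLt
              simp [ha, hb, hc, hd, Fin.ext_iff] at hka hkb hkc hkd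
              omega
            simp only [embedPt, substPair, dif_pos h1, if_neg hka, if_neg hkb, hz]
  rw [key t, key 1, hsym ((Equiv.swap a c).trans (Equiv.swap b d)),
    hsym ((Equiv.swap a c).trans (Equiv.swap b d))]
  exact hind t 1 z

lemma push_symm {n : ℕ} (hn : 4 ≤ n) (f : LP n) (hsym : IsSymmLP f) :
    IsSymmLP (push n hn f) := by
  intro σ x
  rw [← corr_push hn f (x ∘ σ), ← corr_push hn f x, embedPt_comp hn 1 x σ,
    hsym (extPerm hn σ)]

lemma embed_subst_comm {n : ℕ} (hn : 4 ≤ n) (t : ℚˣ) (y : Fin (n - 2) → ℚˣ) :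
    (embedPt 1 (substPair ⟨0, by have := hn; omega⟩ ⟨1, by have := hn; omega⟩ t y) : Fin n → ℚˣ) =
      substPair ⟨0, by have := hn; omega⟩ ⟨1, by have := hn; omega⟩ t (embedPt 1 y) := by
  funext k
  by_cases h : (k : ℕ) < n - 2
  · simp only [embedPt, substPair, dif_pos h]
    by_cases h0 : k = (⟨0, by omega⟩ : Fin n)
    · have : (⟨(k : ℕ), h⟩ : Fin (n - 2)) = ⟨0, by omega⟩ := by
        apply Fin.ext; simp [h0]
      rw [this, if_pos rfl, if_pos h0]
    · by_cases h1 : k = (⟨1, by omega⟩ : Fin n)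
      · have : (⟨(k : ℕ), h⟩ : Fin (n - 2)) = ⟨1, by omega⟩ := by
          apply Fin.ext; simp [h1]
        have h0' : (⟨(k : ℕ), h⟩ : Fin (n - 2)) ≠ ⟨0, by omega⟩ := by
          simp [this, Fin.ext_iff]
        rw [if_neg h0', this, if_pos rfl, if_neg h0, if_pos h1]
      · have h0' : (⟨(k : ℕ), h⟩ : Fin (n - 2)) ≠ ⟨0, by omega⟩ := by
          simp only [Fin.ext_iff] at h0 ⊢; simpa using h0
        have h1' : (⟨(k : ℕ), h⟩ : Fin (n - 2)) ≠ ⟨1, by omega⟩ := by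
          simp only [Fin.ext_iff] at h1 ⊢; simpa using h1
        rw [if_neg h0', if_neg h1', if_neg h0, if_neg h1]
  · have h0 : k ≠ (⟨0, by omega⟩ : Fin n) := by
      intro hk
      have := congrArg Fin.val hk
      simp at this
      omega
    have h1 : k ≠ (⟨1, by omega⟩ : Fin n) := by
      intro hk
      have := congrArg Fin.val hk
      simp at this
      omega
    simp only [substPair, if_neg h0, if_neg h1, embedPt, dif_neg h]

/-- For n ≥ 4, the evaluation map ev : J_n → J_{n-2},
ev(f) = f|_{x_{n-1}=t, x_n=-t}, is well defined (the result lies again in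
J_{n-2}) and respects addition, multiplication and 1.  Here "ev(f) = g" is
expressed by the correspondence `Corr f g`: for all t and y, evaluating f at
(y, t, -t) gives the value of g at y. -/
theorem ev_well_defined_ring_hom (n : ℕ) (hn : 4 ≤ n) :
    let Jn : Set (LP n) := { f | IsSymmLP f ∧
      ∀ (t t' : ℚˣ) (y : Fin n → ℚˣ),
        lpEval (substPair ⟨0, by omega⟩ ⟨1, by omega⟩ t y) f =
        lpEval (substPair ⟨0, by omega⟩ ⟨1, by omega⟩ t' y) f }
    let Jm : Set (LP (n - 2)) := { g | IsSymmLP g ∧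
      ∀ (t t' : ℚˣ) (y : Fin (n - 2) → ℚˣ),
        lpEval (substPair ⟨0, by omega⟩ ⟨1, by omega⟩ t y) g =
        lpEval (substPair ⟨0, by omega⟩ ⟨1, by omega⟩ t' y) g }
    let Corr : LP n → LP (n - 2) → Prop := fun f g =>
      ∀ (t : ℚˣ) (y : Fin (n - 2) → ℚˣ), lpEval (embedPt t y) f = lpEval y g
    (∀ f ∈ Jn, ∃ g ∈ Jm, Corr f g) ∧
    (∀ f₁ f₂ g₁ g₂, Corr f₁ g₁ → Corr f₂ g₂ →
      Corr (f₁ + f₂) (g₁ + g₂) ∧ Corr (f₁ * f₂) (g₁ * g₂)) ∧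
    Corr 1 1 := by
  intro Jn Jm Corr
  refine ⟨?_, ?_, ?_⟩
  · rintro f ⟨hsym, hind⟩
    refine ⟨push n hn f, ⟨push_symm hn f hsym, ?_⟩, ?_⟩
    · intro t t' y
      rw [← corr_push hn f (substPair ⟨0, by omega⟩ ⟨1, by omega⟩ t y),
        ← corr_push hn f (substPair ⟨0, by omega⟩ ⟨1, by omega⟩ t' y),
        embed_subst_comm hn t y, embed_subst_comm hn t' y]
      exact hind t t' _
    · intro t y
      rw [eval_embed_indep hn f hsym hind t y, corr_push hn f y]
  · intro f₁ f₂ g₁ g₂ h1 h2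
    constructor
    · intro t y
      rw [lpEval_add, lpEval_add, h1 t y, h2 t y]
    · intro t y
      rw [lpEval_mul, lpEval_mul, h1 t y, h2 t y]
  · intro t y
    rw [lpEval_one, lpEval_one]
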